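/- For K ∈ {1,...,n}, the intersection of the L1-ball B_1(τK) and the hypercube B_∞(τ) equals the convex hull of the set of vectors in R^n with exactly K nonzero entries, each equal to ±τ. -/

import Mathlib

open Finset

/-- The set of vertices of the K-sparse polytope. -/
private def KSet (n K : ℕ) (τ : ℝ) : Set (Fin n → ℝ) :=
  {x | (Finset.univ.filter fun i => x i ≠ 0).card = K ∧
    ∀ i, x i ≠ 0 → (x i = τ ∨ x i = -τ)}

private lemma sum_upd1 {n : ℕ} (y : Fin n → ℝ) (i : Fin n) (c : ℝ) :
    ∑ k, Function.update y i c k = ∑ k, y k - y i + c := by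
  rw [Finset.sum_update_of_mem (Finset.mem_univ i)]
  rw [Finset.sum_sdiff_eq_sub (Finset.subset_univ {i}), Finset.sum_singleton]
  ring

private lemma sum_upd2 {n : ℕ} (y : Fin n → ℝ) {i j : Fin n} (hij : j ≠ i) (c d : ℝ) :
    ∑ k, Function.update (Function.update y i c) j d k
      = ∑ k, y k - y i - y j + c + d := by
  rw [sum_upd1, sum_upd1, Function.update_of_ne hij]
  ring

/-- Padding: a {0, ±τ}-vector with m ≤ K nonzero entries is in the hull. -/
private lemma pad_lemma {n K : ℕ} (hKn : K ≤ n) {τ : ℝ} (hτ : 0 < τ) :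
    ∀ (d m : ℕ), m + d = K → ∀ y : Fin n → ℝ,
      (∀ i, y i = 0 ∨ y i = τ ∨ y i = -τ) →
      (Finset.univ.filter fun i => y i ≠ 0).card = m →
      y ∈ convexHull ℝ (KSet n K τ) := by
  intro d
  induction d with
  | zero =>
    intro m hm y hy hcard
    apply subset_convexHull
    refine ⟨hcard.trans (by omega), fun i hi => ?_⟩
    rcases hy i with h | h | h
    · exact absurd h hi
    · exact Or.inl h
    · exact Or.inr h
  | succ d ih =>
    intro m hm y hy hcard
    have hmn : m < n := by omega
    obtain ⟨j, hj⟩ : ∃ j, y j = 0 := by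
      by_contra h
      push_neg at h
      have : (Finset.univ.filter fun i => y i ≠ 0) = Finset.univ :=
        Finset.filter_eq_self.mpr fun i _ => h i
      rw [this, Finset.card_univ, Fintype.card_fin] at hcard
      omega
    have hins : ∀ c : ℝ, c ≠ 0 →
        (Finset.univ.filter fun i => Function.update y j c i ≠ 0)
          = insert j (Finset.univ.filter fun i => y i ≠ 0) := by
      intro c hc
      ext k
      by_cases hk : k = j
      · subst hk; simp [hc]
      · simp [Function.update_of_ne hk, hk]
    have hjnot : j ∉ (Finset.univ.filter fun i => y i ≠ 0) := by simp [hj]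
    have hcard' : ∀ c : ℝ, c ≠ 0 →
        (Finset.univ.filter fun i => Function.update y j c i ≠ 0).card = m + 1 := by
      intro c hc
      rw [hins c hc, Finset.card_insert_of_notMem hjnot, hcard]
    have hentries : ∀ c : ℝ, (c = τ ∨ c = -τ) →
        ∀ i, Function.update y j c i = 0 ∨ Function.update y j c i = τ ∨
          Function.update y j c i = -τ := by
      intro c hc i
      by_cases hk : i = j
      · subst hk; rw [Function.update_self]; tauto
      · rw [Function.update_of_ne hk]; exact hy i
    have hu := ih (m + 1) (by omega) (Function.update y j τ)
      (hentries τ (Or.inl rfl)) (hcard' τ hτ.ne')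
    have hv := ih (m + 1) (by omega) (Function.update y j (-τ))
      (hentries (-τ) (Or.inr rfl)) (hcard' (-τ) (by simpa using hτ.ne'))
    have hy' : y = (1/2 : ℝ) • Function.update y j τ
        + (1/2 : ℝ) • Function.update y j (-τ) := by
      funext k
      by_cases hk : k = j
      · subst hk; simp [hj]
      · simp [Function.update_of_ne hk]; ring
    rw [hy']
    exact convex_convexHull ℝ _ hu hv (by norm_num) (by norm_num) (by norm_num)

/-- Flat case: entries in {0, τ}, sum at most τK. -/
private lemma flat_lemma {n K : ℕ} (hKn : K ≤ n) {τ : ℝ} (hτ : 0 < τ)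
    (y : Fin n → ℝ) (h01 : ∀ i, y i = 0 ∨ y i = τ)
    (hsum : (∑ i, y i) ≤ τ * K) : y ∈ convexHull ℝ (KSet n K τ) := by
  set m := (Finset.univ.filter fun i => y i ≠ 0).card with hm
  have hsum' : ∑ i, y i = m * τ := by
    rw [← Finset.sum_filter_ne_zero Finset.univ]
    rw [Finset.sum_congr rfl (fun i hi => ?_), Finset.sum_const, nsmul_eq_mul]
    rcases h01 i with h | h
    · exact absurd h (Finset.mem_filter.mp hi).2
    · exact h
  have hmK : m ≤ K := by
    have : (m : ℝ) ≤ (K : ℝ) := by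
      rw [hsum'] at hsum; nlinarith
    exact_mod_cast this
  exact pad_lemma hKn hτ (K - m) m (by omega) y (fun i => by rcases h01 i with h | h <;> tauto) rfl

/-- Main inductive lemma: any nonnegative point of the polytope is in the hull. -/
private lemma core_lemma {n K : ℕ} (hKn : K ≤ n) {τ : ℝ} (hτ : 0 < τ) :
    ∀ (N : ℕ) (y : Fin n → ℝ),
      (Finset.univ.filter fun i => 0 < y i ∧ y i < τ).card
        + (if (∑ i, y i) < τ * K then 1 else 0) ≤ N →
      (∀ i, 0 ≤ y i) → (∀ i, y i ≤ τ) → (∑ i, y i) ≤ τ * K →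
      y ∈ convexHull ℝ (KSet n K τ) := by
  intro N
  induction N with
  | zero =>
    intro y hN h0 h1 hsum
    have hF : (Finset.univ.filter fun i => 0 < y i ∧ y i < τ) = ∅ :=
      Finset.card_eq_zero.mp (by omega)
    refine flat_lemma hKn hτ y (fun i => ?_) hsum
    rcases eq_or_lt_of_le (h0 i) with h | h
    · exact Or.inl h.symm
    rcases eq_or_lt_of_le (h1 i) with h' | h'
    · exact Or.inr h'
    · exfalso
      have : i ∈ (Finset.univ.filter fun i => 0 < y i ∧ y i < τ) := by
        simp [h, h']
      rw [hF] at this; simp at this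
  | succ N ih =>
    intro y hN h0 h1 hsum
    by_cases hF : (Finset.univ.filter fun i => 0 < y i ∧ y i < τ) = ∅
    · refine flat_lemma hKn hτ y (fun i => ?_) hsum
      rcases eq_or_lt_of_le (h0 i) with h | h
      · exact Or.inl h.symm
      rcases eq_or_lt_of_le (h1 i) with h' | h'
      · exact Or.inr h'
      · exfalso
        have : i ∈ (Finset.univ.filter fun i => 0 < y i ∧ y i < τ) := by
          simp [h, h']
        rw [hF] at this; simp at this
    obtain ⟨i, hiF⟩ := Finset.nonempty_of_ne_empty hF
    have hiF' := Finset.mem_filter.mp hiF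
    obtain ⟨hi0, hiτ⟩ := hiF'.2
    set F := (Finset.univ.filter fun i => 0 < y i ∧ y i < τ) with hFdef
    have hFc : 1 ≤ F.card := Finset.card_pos.mpr ⟨i, hiF⟩
    by_cases hs : (∑ k, y k) < τ * K
    · -- slack case: move coordinate i alone
      have hNF : F.card ≤ N := by
        rw [if_pos hs] at hN; omega
      set s := ∑ k, y k with hsdef
      set c := min τ (y i + (τ * K - s)) with hcdef
      have hci : y i < c := lt_min hiτ (by linarith)
      have hc0 : 0 < c := (h0 i).trans_lt hci
      have hcτ : c ≤ τ := min_le_left _ _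
      set a := Function.update y i 0 with hadef
      set b := Function.update y i c with hbdef
      have hsa : ∑ k, a k = s - y i := by rw [hadef, sum_upd1]; ring
      have hsb : ∑ k, b k = s - y i + c := by rw [hbdef, sum_upd1]
      have ha : a ∈ convexHull ℝ (KSet n K τ) := by
        refine ih a ?_ (fun k => ?_) (fun k => ?_) ?_
        · have hsub : (Finset.univ.filter fun k => 0 < a k ∧ a k < τ) ⊆ F.erase i := by
            intro k hk
            rw [Finset.mem_filter] at hk
            have hki : k ≠ i := by
              rintro rfl
              rw [hadef, Function.update_self] at hk
              exact lt_irrefl 0 hk.2.1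
            rw [hadef, Function.update_of_ne hki] at hk
            exact Finset.mem_erase.mpr ⟨hki, Finset.mem_filter.mpr ⟨Finset.mem_univ k, hk.2⟩⟩
          have := (Finset.card_le_card hsub).trans_eq (Finset.card_erase_of_mem hiF)
          split <;> omega
        · by_cases hk : k = i
          · subst hk; rw [hadef, Function.update_self]
          · rw [hadef, Function.update_of_ne hk]; exact h0 k
        · by_cases hk : k = i
          · subst hk; rw [hadef, Function.update_self]; exact hτ.le
          · rw [hadef, Function.update_of_ne hk]; exact h1 k
        · rw [hsa]; linarith [h0 i]
      have hb : b ∈ convexHull ℝ (KSet n K τ) := by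
        refine ih b ?_ (fun k => ?_) (fun k => ?_) ?_
        · by_cases hceq : c = τ
          · have hsub : (Finset.univ.filter fun k => 0 < b k ∧ b k < τ) ⊆ F.erase i := by
              intro k hk
              rw [Finset.mem_filter] at hk
              have hki : k ≠ i := by
                rintro rfl
                rw [hbdef, Function.update_self] at hk
                exact lt_irrefl τ (hceq ▸ hk.2.2)
              rw [hbdef, Function.update_of_ne hki] at hk
              exact Finset.mem_erase.mpr ⟨hki, Finset.mem_filter.mpr ⟨Finset.mem_univ k, hk.2⟩⟩
            have := (Finset.card_le_card hsub).trans_eq (Finset.card_erase_of_mem hiF)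
            split <;> omega
          · have hcval : c = y i + (τ * K - s) := by
              rcases min_choice τ (y i + (τ * K - s)) with h | h
              · exact absurd (hcdef.trans h) hceq
              · exact hcdef.trans h
            have hsbK : ∑ k, b k = τ * K := by rw [hsb, hcval]; ring
            have hnot : ¬ (∑ k, b k) < τ * K := by rw [hsbK]; exact lt_irrefl _
            rw [if_neg hnot]
            have hsub : (Finset.univ.filter fun k => 0 < b k ∧ b k < τ) ⊆ F := by
              intro k hk
              rw [Finset.mem_filter] at hk
              by_cases hki : k = i
              · subst hki; exact hiF
              · rw [hbdef, Function.update_of_ne hki] at hk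
                exact Finset.mem_filter.mpr ⟨Finset.mem_univ k, hk.2⟩
            have := Finset.card_le_card hsub
            omega
        · by_cases hk : k = i
          · subst hk; rw [hbdef, Function.update_self]; exact hc0.le
          · rw [hbdef, Function.update_of_ne hk]; exact h0 k
        · by_cases hk : k = i
          · subst hk; rw [hbdef, Function.update_self]; exact hcτ
          · rw [hbdef, Function.update_of_ne hk]; exact h1 k
        · rw [hsb]
          have : c ≤ y i + (τ * K - s) := min_le_right _ _
          linarith
      have hyc : y = ((c - y i)/c) • a + (y i / c) • b := by
        funext k
        by_cases hk : k = i
        · subst hk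
          simp only [Pi.add_apply, Pi.smul_apply, smul_eq_mul, hadef, hbdef,
            Function.update_self]
          field_simp
          ring
        · simp only [Pi.add_apply, Pi.smul_apply, smul_eq_mul, hadef, hbdef,
            Function.update_of_ne hk]
          field_simp
          ring
      rw [hyc]
      exact convex_convexHull ℝ _ ha hb
        (div_nonneg (by linarith) hc0.le) (div_nonneg (h0 i) hc0.le) (by rw [← add_div, sub_add_cancel, div_self hc0.ne'])
    · -- tight case: sum = τK, two fractional coordinates
      have hseq : (∑ k, y k) = τ * K := le_antisymm hsum (not_lt.mp hs)
      have hNF : F.card ≤ N + 1 := by rw [if_neg hs] at hN; omega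
      obtain ⟨j, hjF, hji⟩ : ∃ j ∈ F, j ≠ i := by
        by_contra h
        push_neg at h
        have hFi : F = {i} := by
          apply Finset.eq_singleton_iff_unique_mem.mpr
          exact ⟨hiF, fun k hk => h k hk⟩
        have hyk : ∀ k ∈ Finset.univ.erase i, y k = 0 ∨ y k = τ := by
          intro k hk
          have hki : k ≠ i := (Finset.mem_erase.mp hk).1
          rcases eq_or_lt_of_le (h0 k) with h' | h'
          · exact Or.inl h'.symm
          rcases eq_or_lt_of_le (h1 k) with h'' | h''
          · exact Or.inr h''
          · exfalso
            have : k ∈ F := Finset.mem_filter.mpr ⟨Finset.mem_univ k, h', h''⟩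
            rw [hFi] at this
            exact hki (Finset.mem_singleton.mp this)
        set m := ((Finset.univ.erase i).filter fun k => y k ≠ 0).card with hmdef
        have hrest : ∑ k ∈ Finset.univ.erase i, y k = m * τ := by
          rw [← Finset.sum_filter_ne_zero (Finset.univ.erase i)]
          rw [Finset.sum_congr rfl (fun k hk => ?_), Finset.sum_const, nsmul_eq_mul]
          have hk' := Finset.mem_filter.mp hk
          rcases hyk k hk'.1 with h' | h'
          · exact absurd h' hk'.2
          · exact h'
        have hsplit : ∑ k ∈ Finset.univ.erase i, y k + y i = ∑ k, y k :=
          Finset.sum_erase_add _ _ (Finset.mem_univ i)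
        have h1' : (m : ℝ) < K := by nlinarith [hrest, hsplit, hseq, hi0, hiτ]
        have h2' : (K : ℝ) < m + 1 := by nlinarith [hrest, hsplit, hseq, hi0, hiτ]
        have h1'' : m < K := by exact_mod_cast h1'
        have h2'' : (K : ℝ) < ((m + 1 : ℕ) : ℝ) := by push_cast; linarith
        have h2''' : K < m + 1 := by exact_mod_cast h2''
        omega
      have hjF' := (Finset.mem_filter.mp hjF).2
      obtain ⟨hj0, hjτ⟩ := hjF'
      set t₁ := min (τ - y i) (y j) with ht1def
      set t₂ := min (y i) (τ - y j) with ht2def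
      have ht1 : 0 < t₁ := lt_min (by linarith) hj0
      have ht2 : 0 < t₂ := lt_min hi0 (by linarith)
      set a := Function.update (Function.update y i (y i + t₁)) j (y j - t₁) with hadef
      set b := Function.update (Function.update y i (y i - t₂)) j (y j + t₂) with hbdef
      have hija : ∀ k, (k = i → a k = y i + t₁) ∧ (k = j → a k = y j - t₁)
          ∧ (k ≠ i → k ≠ j → a k = y k) := by
        intro k
        refine ⟨fun hk => ?_, fun hk => ?_, fun hk1 hk2 => ?_⟩
        · subst hk
          rw [hadef, Function.update_of_ne (Ne.symm hji), Function.update_self]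
        · subst hk; rw [hadef, Function.update_self]
        · rw [hadef, Function.update_of_ne hk2, Function.update_of_ne hk1]
      have hijb : ∀ k, (k = i → b k = y i - t₂) ∧ (k = j → b k = y j + t₂)
          ∧ (k ≠ i → k ≠ j → b k = y k) := by
        intro k
        refine ⟨fun hk => ?_, fun hk => ?_, fun hk1 hk2 => ?_⟩
        · subst hk
          rw [hbdef, Function.update_of_ne (Ne.symm hji), Function.update_self]
        · subst hk; rw [hbdef, Function.update_self]
        · rw [hbdef, Function.update_of_ne hk2, Function.update_of_ne hk1]
      have hsa : ∑ k, a k = ∑ k, y k := by rw [hadef, sum_upd2 y hji]; ring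
      have hsb : ∑ k, b k = ∑ k, y k := by rw [hbdef, sum_upd2 y hji]; ring
      have ht1le1 : t₁ ≤ τ - y i := min_le_left _ _
      have ht1le2 : t₁ ≤ y j := min_le_right _ _
      have ht2le1 : t₂ ≤ y i := min_le_left _ _
      have ht2le2 : t₂ ≤ τ - y j := min_le_right _ _
      -- membership of a
      have hbound : ∀ z : Fin n → ℝ, (∑ k, z k) = ∑ k, y k →
          (∀ k, k ≠ i → k ≠ j → z k = y k) →
          (¬ (0 < z i ∧ z i < τ) ∨ ¬ (0 < z j ∧ z j < τ)) →
          (Finset.univ.filter fun k => 0 < z k ∧ z k < τ).card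
            + (if (∑ k, z k) < τ * K then 1 else 0) ≤ N := by
        intro z hz hzk hzij
        have hnot : ¬ (∑ k, z k) < τ * K := by rw [hz, hseq]; exact lt_irrefl _
        rw [if_neg hnot, add_zero]
        rcases hzij with hcase | hcase
        · have hsub : (Finset.univ.filter fun k => 0 < z k ∧ z k < τ) ⊆ F.erase i := by
            intro k hk
            rw [Finset.mem_filter] at hk
            have hki : k ≠ i := by rintro rfl; exact hcase hk.2
            by_cases hkj : k = j
            · subst hkj; exact Finset.mem_erase.mpr ⟨hki, hjF⟩
            · rw [hzk k hki hkj] at hk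
              exact Finset.mem_erase.mpr ⟨hki,
                Finset.mem_filter.mpr ⟨Finset.mem_univ k, hk.2⟩⟩
          have := (Finset.card_le_card hsub).trans_eq (Finset.card_erase_of_mem hiF)
          omega
        · have hsub : (Finset.univ.filter fun k => 0 < z k ∧ z k < τ) ⊆ F.erase j := by
            intro k hk
            rw [Finset.mem_filter] at hk
            have hkj : k ≠ j := by rintro rfl; exact hcase hk.2
            by_cases hki : k = i
            · subst hki; exact Finset.mem_erase.mpr ⟨hkj, hiF⟩
            · rw [hzk k hki hkj] at hk
              exact Finset.mem_erase.mpr ⟨hkj,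
                Finset.mem_filter.mpr ⟨Finset.mem_univ k, hk.2⟩⟩
          have := (Finset.card_le_card hsub).trans_eq (Finset.card_erase_of_mem hjF)
          omega
      have ha : a ∈ convexHull ℝ (KSet n K τ) := by
        refine ih a ?_ (fun k => ?_) (fun k => ?_) (by rw [hsa]; exact hsum)
        · refine hbound a hsa (fun k hk1 hk2 => (hija k).2.2 hk1 hk2) ?_
          rcases min_choice (τ - y i) (y j) with h | h
          · left
            have h' : t₁ = τ - y i := ht1def.trans h
            rw [(hija i).1 rfl]
            intro hcon; linarith [hcon.2]
          · right
            have h' : t₁ = y j := ht1def.trans h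
            rw [(hija j).2.1 rfl]
            intro hcon; linarith [hcon.1]
        · by_cases hk1 : k = i
          · subst hk1; rw [(hija k).1 rfl]; linarith
          by_cases hk2 : k = j
          · subst hk2; rw [(hija k).2.1 rfl]; linarith
          · rw [(hija k).2.2 hk1 hk2]; exact h0 k
        · by_cases hk1 : k = i
          · subst hk1; rw [(hija k).1 rfl]; linarith
          by_cases hk2 : k = j
          · subst hk2; rw [(hija k).2.1 rfl]; linarith
          · rw [(hija k).2.2 hk1 hk2]; exact h1 k
      have hb : b ∈ convexHull ℝ (KSet n K τ) := by
        refine ih b ?_ (fun k => ?_) (fun k => ?_) (by rw [hsb]; exact hsum)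
        · refine hbound b hsb (fun k hk1 hk2 => (hijb k).2.2 hk1 hk2) ?_
          rcases min_choice (y i) (τ - y j) with h | h
          · left
            have h' : t₂ = y i := ht2def.trans h
            rw [(hijb i).1 rfl]
            intro hcon; linarith [hcon.1]
          · right
            have h' : t₂ = τ - y j := ht2def.trans h
            rw [(hijb j).2.1 rfl]
            intro hcon; linarith [hcon.2]
        · by_cases hk1 : k = i
          · subst hk1; rw [(hijb k).1 rfl]; linarith
          by_cases hk2 : k = j
          · subst hk2; rw [(hijb k).2.1 rfl]; linarith
          · rw [(hijb k).2.2 hk1 hk2]; exact h0 k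
        · by_cases hk1 : k = i
          · subst hk1; rw [(hijb k).1 rfl]; linarith
          by_cases hk2 : k = j
          · subst hk2; rw [(hijb k).2.1 rfl]; linarith
          · rw [(hijb k).2.2 hk1 hk2]; exact h1 k
      have ht12 : 0 < t₁ + t₂ := by linarith
      have hyc : y = (t₂/(t₁+t₂)) • a + (t₁/(t₁+t₂)) • b := by
        funext k
        simp only [Pi.add_apply, Pi.smul_apply, smul_eq_mul]
        by_cases hk1 : k = i
        · subst hk1
          rw [(hija k).1 rfl, (hijb k).1 rfl]
          field_simp
          ring
        by_cases hk2 : k = j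
        · subst hk2
          rw [(hija k).2.1 rfl, (hijb k).2.1 rfl]
          field_simp
          ring
        · rw [(hija k).2.2 hk1 hk2, (hijb k).2.2 hk1 hk2]
          field_simp
          ring
      rw [hyc]
      exact convex_convexHull ℝ _ ha hb
        (by positivity) (by positivity)
        (by rw [← add_div, add_comm t₂ t₁, div_self ht12.ne'])

/-- For K ∈ {1,...,n}, the intersection of the L1-ball B_1(τK) and the hypercube B_∞(τ)
equals the convex hull of the set of vectors in R^n with exactly K nonzero entries, each
equal to ±τ (the K-sparse polytope of radius τ). -/
theorem k_sparse_polytope_eq {n K : ℕ} (hK1 : 1 ≤ K) (hKn : K ≤ n) (τ : ℝ) (hτ : 0 < τ) :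
    {x : Fin n → ℝ | (∑ i, |x i|) ≤ τ * K ∧ ∀ i, |x i| ≤ τ} =
      convexHull ℝ {x : Fin n → ℝ |
        (Finset.univ.filter fun i => x i ≠ 0).card = K ∧
        ∀ i, x i ≠ 0 → (x i = τ ∨ x i = -τ)} := by
  have hSeq : {x : Fin n → ℝ |
      (Finset.univ.filter fun i => x i ≠ 0).card = K ∧
      ∀ i, x i ≠ 0 → (x i = τ ∨ x i = -τ)} = KSet n K τ := rfl
  rw [hSeq]
  apply Set.Subset.antisymm
  · -- hard direction
    intro x hx
    obtain ⟨hx1, hx2⟩ := hx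
    set ε : Fin n → ℝ := fun i => if x i < 0 then -1 else 1 with hεdef
    have hε1 : ∀ i, ε i = 1 ∨ ε i = -1 := by
      intro i; by_cases h : x i < 0 <;> simp [hεdef, h]
    have hεx : ∀ i, x i = ε i * |x i| := by
      intro i
      by_cases h : x i < 0
      · simp [hεdef, h, abs_of_neg h]
      · simp [hεdef, h, abs_of_nonneg (not_lt.mp h)]
    have hmem : (fun i => |x i|) ∈ convexHull ℝ (KSet n K τ) := by
      refine core_lemma hKn hτ _ _ le_rfl (fun i => abs_nonneg _) hx2 hx1
    set L : (Fin n → ℝ) →ₗ[ℝ] (Fin n → ℝ) :=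
      { toFun := fun z k => ε k * z k
        map_add' := fun u v => by funext k; simp [mul_add]
        map_smul' := fun c u => by funext k; simp [smul_eq_mul]; ring } with hLdef
    have hximg : x = L (fun i => |x i|) := by
      funext k; exact hεx k
    have himg : L '' convexHull ℝ (KSet n K τ) = convexHull ℝ (L '' KSet n K τ) :=
      L.image_convexHull _
    have hLS : L '' KSet n K τ ⊆ KSet n K τ := by
      rintro _ ⟨v, ⟨hv1, hv2⟩, rfl⟩
      constructor
      · rw [← hv1]
        congr 1
        ext k
        have : ε k ≠ 0 := by rcases hε1 k with h | h <;> rw [h] <;> norm_num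
        simp [hLdef, this]
      · intro k hk
        have hvk : v k ≠ 0 := by
          intro h
          apply hk
          simp [hLdef, h]
        rcases hv2 k hvk with h | h <;> rcases hε1 k with h' | h' <;>
          simp [hLdef, h, h'] <;> ring_nf <;> tauto
    rw [hximg]
    have : L (fun i => |x i|) ∈ L '' convexHull ℝ (KSet n K τ) :=
      Set.mem_image_of_mem _ hmem
    rw [himg] at this
    exact convexHull_mono hLS this
  · -- easy direction
    apply convexHull_min
    · rintro v ⟨hv1, hv2⟩
      constructor
      · have habs : ∀ i, |v i| ≠ 0 ↔ v i ≠ 0 := fun i => by simp [abs_eq_zero]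
        have : ∑ i, |v i| = ∑ i ∈ Finset.univ.filter fun i => v i ≠ 0, |v i| := by
          rw [← Finset.sum_filter_ne_zero Finset.univ]
          apply Finset.sum_congr _ (fun _ _ => rfl)
          ext k; simp [abs_eq_zero]
        have hval : ∀ i ∈ Finset.univ.filter fun i => v i ≠ 0, |v i| = τ := by
          intro i hi
          have hvi := (Finset.mem_filter.mp hi).2
          rcases hv2 i hvi with h | h
          · rw [h, abs_of_pos hτ]
          · rw [h, abs_neg, abs_of_pos hτ]
        rw [this, Finset.sum_congr rfl hval, Finset.sum_const, nsmul_eq_mul, hv1]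
        exact le_of_eq (mul_comm _ _)
      · intro i
        by_cases h : v i = 0
        · rw [h]; simp [hτ.le]
        · rcases hv2 i h with h' | h' <;> rw [h'] <;>
            simp [abs_of_pos hτ, hτ.le]
    · -- convexity of the polytope
      intro p hp q hq α β hα hβ hαβ
      constructor
      · have hterm : ∀ i, |(α • p + β • q) i| ≤ α * |p i| + β * |q i| := by
          intro i
          simp only [Pi.add_apply, Pi.smul_apply, smul_eq_mul]
          calc |α * p i + β * q i| ≤ |α * p i| + |β * q i| := abs_add_le _ _
            _ = α * |p i| + β * |q i| := by
                rw [abs_mul, abs_mul, abs_of_nonneg hα, abs_of_nonneg hβ]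
        calc ∑ i, |(α • p + β • q) i| ≤ ∑ i, (α * |p i| + β * |q i|) :=
              Finset.sum_le_sum (fun i _ => hterm i)
          _ = α * ∑ i, |p i| + β * ∑ i, |q i| := by
              rw [Finset.sum_add_distrib, Finset.mul_sum, Finset.mul_sum]
          _ ≤ α * (τ * K) + β * (τ * K) := by
              have := hp.1; have := hq.1
              exact add_le_add (mul_le_mul_of_nonneg_left hp.1 hα)
                (mul_le_mul_of_nonneg_left hq.1 hβ)
          _ = τ * K := by rw [← add_mul, hαβ, one_mul]
      · intro i
        simp only [Pi.add_apply, Pi.smul_apply, smul_eq_mul]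
        calc |α * p i + β * q i| ≤ |α * p i| + |β * q i| := abs_add_le _ _
          _ = α * |p i| + β * |q i| := by
              rw [abs_mul, abs_mul, abs_of_nonneg hα, abs_of_nonneg hβ]
          _ ≤ α * τ + β * τ :=
              add_le_add (mul_le_mul_of_nonneg_left (hp.2 i) hα)
                (mul_le_mul_of_nonneg_left (hq.2 i) hβ)
          _ = τ := by rw [← add_mul, hαβ, one_mul]
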